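/- For every integer n ≥ 5, the generalised Higman group H_n contains a non-abelian free subgroup; that is, there exists an injective group homomorphism from the free group on two generators into H_n. -/

import Mathlib

def higmanRels (n : ℕ) : Set (FreeGroup (ZMod n)) :=
  {r | ∃ i : ZMod n,
    r = FreeGroup.of i * FreeGroup.of (i + 1) * (FreeGroup.of i)⁻¹ * ((FreeGroup.of (i + 1))⁻¹) ^ 2}

abbrev HigmanGroup (n : ℕ) : Type := PresentedGroup (higmanRels n)

open Monoid Monoid.PushoutI Monoid.PushoutI.NormalWord Pointwise

namespace HigmanAux

theorem map_rel_aux {G H : Type*} [Group G] [Group H] (f : G →* H) {x y : G}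
    (h : x * y * x⁻¹ * (y⁻¹) ^ 2 = 1) :
    f x * f y * (f x)⁻¹ * ((f y)⁻¹) ^ 2 = 1 := by
  rw [← map_inv, ← map_inv, ← map_pow, ← map_mul, ← map_mul, ← map_mul, h, map_one]

theorem rel_of_conj {G : Type*} [Group G] {a b : G} (h : a * b = b ^ 2 * a) :
    a * b * a⁻¹ * (b⁻¹) ^ 2 = 1 := by
  rw [h]; group

theorem unit_pow (u : FreeGroup Unit) : ∃ n : ℤ, u = FreeGroup.of () ^ n ∧ (u ≠ 1 → n ≠ 0) := by
  refine ⟨FreeGroup.freeGroupUnitEquivInt u, ?_, ?_⟩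
  · exact (FreeGroup.freeGroupUnitEquivInt.symm_apply_apply u).symm
  · intro hu hn
    apply hu
    have h2 := (FreeGroup.freeGroupUnitEquivInt.symm_apply_apply u)
    rw [hn] at h2
    rw [← h2]
    rfl

theorem unit_lift_injective {G : Type*} [Group G] {y : G} (hy : ∀ r : ℤ, y ^ r = 1 → r = 0) :
    Function.Injective (FreeGroup.lift (fun _ : Unit => y)) := by
  rw [injective_iff_map_eq_one]
  intro u hu
  obtain ⟨n, rfl, -⟩ := unit_pow u
  rw [map_zpow, FreeGroup.lift_apply_of] at hu
  rw [hy n hu, zpow_zero]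

/-- lift through a hom -/
theorem lift_pair_comp {G H : Type*} [Group G] [Group H] (ψ : G →* H) (x y : G) :
    ψ.comp (FreeGroup.lift (fun b : Fin 2 => if b = 0 then x else y)) =
      FreeGroup.lift (fun b : Fin 2 => if b = 0 then ψ x else ψ y) := by
  apply FreeGroup.ext_hom
  intro b
  simp only [MonoidHom.comp_apply, FreeGroup.lift_apply_of]
  split_ifs <;> rfl

theorem lift_pair_swap_injective {G : Type*} [Group G] {x y : G}
    (h : Function.Injective (FreeGroup.lift (fun b : Fin 2 => if b = 0 then x else y))) :
    Function.Injective (FreeGroup.lift (fun b : Fin 2 => if b = 0 then y else x)) := by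
  have key : (FreeGroup.lift (fun b : Fin 2 => if b = 0 then y else x)) =
      (FreeGroup.lift (fun b : Fin 2 => if b = 0 then x else y)).comp
        (FreeGroup.freeGroupCongr (Equiv.swap (0 : Fin 2) 1)).toMonoidHom := by
    apply FreeGroup.ext_hom
    intro b
    fin_cases b <;> simp [Equiv.swap_apply_def]
  rw [key]
  exact h.comp (MulEquiv.injective _)

noncomputable def D : Equiv.Perm ℝ := Equiv.mulLeft₀ (2 : ℝ) two_ne_zero
def T : Equiv.Perm ℝ := Equiv.addRight (1 : ℝ)

@[simp] theorem D_apply (x : ℝ) : D x = 2 * x := rfl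
@[simp] theorem T_apply (x : ℝ) : T x = x + 1 := rfl

theorem DT_rel : D * T = T ^ 2 * D := by
  ext x
  simp [Equiv.Perm.mul_apply, pow_succ, T, D]
  ring

theorem T_zpow (m : ℤ) : ∀ x : ℝ, (T ^ m) x = x + m := by
  induction m using Int.induction_on with
  | zero => simp
  | succ i ih =>
    intro x
    rw [zpow_add_one, Equiv.Perm.mul_apply, ih]
    push_cast; simp; ring
  | pred i ih =>
    intro x
    rw [zpow_sub_one, Equiv.Perm.mul_apply]
    have hT : (T⁻¹ : Equiv.Perm ℝ) x = x - 1 := by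
      rw [Equiv.Perm.inv_def, Equiv.symm_apply_eq]
      simp
    rw [hT, ih]
    push_cast; ring

theorem D_zpow (p : ℤ) : ∀ x : ℝ, (D ^ p) x = (2 : ℝ) ^ p * x := by
  induction p using Int.induction_on with
  | zero => simp
  | succ i ih =>
    intro x
    rw [zpow_add_one, Equiv.Perm.mul_apply, ih, D_apply]
    rw [zpow_add_one₀ two_ne_zero]
    ring
  | pred i ih =>
    intro x
    rw [zpow_sub_one, Equiv.Perm.mul_apply]
    have hD : (D⁻¹ : Equiv.Perm ℝ) x = (2:ℝ)⁻¹ * x := by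
      rw [Equiv.Perm.inv_def, Equiv.symm_apply_eq]
      simp [D]
    rw [hD, ih, zpow_sub_one₀ two_ne_zero]
    ring

theorem two_zpow_eq_one {p : ℤ} (h : (2 : ℝ) ^ p = 1) : p = 0 := by
  by_contra hp
  rcases lt_or_gt_of_ne hp with hneg | hpos
  · have := zpow_lt_one_of_neg₀ (one_lt_two (α := ℝ)) hneg
    rw [h] at this; exact lt_irrefl _ this
  · have := one_lt_zpow₀ (one_lt_two (α := ℝ)) hpos
    rw [h] at this; exact lt_irrefl _ this

theorem DT_powers_eq {p m : ℤ} (h : D ^ p = T ^ m) : p = 0 ∧ m = 0 := by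
  have h0 : (D ^ p) 0 = (T ^ m) 0 := by rw [h]
  rw [D_zpow, T_zpow] at h0
  have hm : m = 0 := by have := h0; simp at this; exact_mod_cast this.symm
  have h1 : (D ^ p) 1 = (T ^ m) 1 := by rw [h]
  rw [D_zpow, T_zpow, hm] at h1
  simp at h1
  exact ⟨two_zpow_eq_one h1, hm⟩

/-- chain of Baumslag-Solitar relations -/
def chainRels (k : ℕ) : Set (FreeGroup (Fin (k + 1))) :=
  {r | ∃ i : Fin k, r = FreeGroup.of i.castSucc * FreeGroup.of i.succ *
      (FreeGroup.of i.castSucc)⁻¹ * ((FreeGroup.of i.succ)⁻¹) ^ 2}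

abbrev Chain (k : ℕ) : Type := PresentedGroup (chainRels k)

abbrev ch (k : ℕ) (m : Fin (k + 1)) : Chain k := PresentedGroup.of m

theorem chain_rel (k : ℕ) (i : Fin k) :
    ch k i.castSucc * ch k i.succ * (ch k i.castSucc)⁻¹ * ((ch k i.succ)⁻¹) ^ 2 = 1 := by
  have h : (PresentedGroup.mk (chainRels k)) (FreeGroup.of i.castSucc * FreeGroup.of i.succ *
      (FreeGroup.of i.castSucc)⁻¹ * ((FreeGroup.of i.succ)⁻¹) ^ 2) = 1 := by
    apply (QuotientGroup.eq_one_iff _).2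
    exact Subgroup.subset_normalClosure ⟨i, rfl⟩
  simpa only [map_mul, map_inv, map_pow, ch, PresentedGroup.of] using h

/-- the representation of `Chain 1` on `ℝ` -/
noncomputable def rho : Chain 1 →* Equiv.Perm ℝ :=
  PresentedGroup.toGroup (f := fun m : Fin 2 => if m = 0 then D else T) (by
    rintro r ⟨i, rfl⟩
    have hi : i = 0 := Subsingleton.elim i 0
    subst hi
    simp only [map_mul, map_inv, map_pow, FreeGroup.lift_apply_of]
    norm_num
    exact rel_of_conj DT_rel)

@[simp] theorem rho_zero : rho (ch 1 0) = D := by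
  simp [rho, ch, PresentedGroup.toGroup.of]

@[simp] theorem rho_one : rho (ch 1 1) = T := by
  simp [rho, ch, PresentedGroup.toGroup.of]

theorem F1 {p m : ℤ} (h : (ch 1 0) ^ p = (ch 1 1) ^ m) : p = 0 ∧ m = 0 := by
  have := congrArg rho h
  rw [map_zpow, map_zpow, rho_zero, rho_one] at this
  exact DT_powers_eq this

theorem F2 {m : ℤ} (h : (ch 1 1) ^ m = 1) : m = 0 := by
  have : (ch 1 0) ^ (0 : ℤ) = (ch 1 1) ^ m := by simpa using h.symm
  exact (F1 this).2

theorem F3 {p : ℤ} (h : (ch 1 0) ^ p = 1) : p = 0 := by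
  have : (ch 1 0) ^ p = (ch 1 1) ^ (0 : ℤ) := by simpa using h
  exact (F1 this).1

section PingPong

variable {ι : Type*} {G : ι → Type*} [∀ i, Group (G i)] {H : Type*} [Group H]
  {φ : ∀ i, H →* G i}

theorem fstIdx_of_smul [DecidableEq ι] [∀ i, DecidableEq (G i)] {d : Monoid.PushoutI.NormalWord.Transversal φ}
    (i₀ : ι) (u : G i₀) (hu : u ∉ (φ i₀).range) (w : NormalWord d)
    (hw : w.fstIdx ≠ some i₀) :
    (of (φ := φ) i₀ u • w).fstIdx = some i₀ := by
  rw [← Monoid.PushoutI.NormalWord.cons_eq_smul u w hw hu]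
  simp [Monoid.PushoutI.NormalWord.cons, CoprodI.Word.fstIdx_cons]

theorem push_subset [DecidableEq ι] [∀ i, DecidableEq (G i)] {d : Monoid.PushoutI.NormalWord.Transversal φ}
    {i₀ j₀ : ι} (hne : j₀ ≠ i₀) {g₀ : G i₀}
    (hg₀ : ∀ n : ℤ, n ≠ 0 → g₀ ^ n ∉ (φ i₀).range)
    (u : FreeGroup Unit) (hu : u ≠ 1) :
    (FreeGroup.lift fun _ : Unit => of (φ := φ) i₀ g₀) u •
        {w : NormalWord d | w.fstIdx = some j₀} ⊆ {w : NormalWord d | w.fstIdx = some i₀} := by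
  obtain ⟨n, rfl, hn0⟩ := unit_pow u
  have hn : n ≠ 0 := hn0 hu
  rintro x ⟨w, hw, rfl⟩
  simp only [Set.mem_setOf_eq] at hw ⊢
  have key : (FreeGroup.lift fun _ : Unit => of (φ := φ) i₀ g₀) (FreeGroup.of () ^ n) =
      of (φ := φ) i₀ (g₀ ^ n) := by
    rw [map_zpow, FreeGroup.lift_apply_of, map_zpow]
  rw [key]
  refine fstIdx_of_smul i₀ (g₀ ^ n) (hg₀ n hn) w ?_
  intro hcon
  rw [hw] at hcon
  exact hne (Option.some_injective _ hcon)

theorem pushout_free_pair (hφ : ∀ i, Function.Injective (φ i)) {i j : ι} (hij : i ≠ j)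
    {g : G i} {h : G j}
    (hg : ∀ n : ℤ, n ≠ 0 → g ^ n ∉ (φ i).range)
    (hh : ∀ n : ℤ, n ≠ 0 → h ^ n ∉ (φ j).range)
    (a : Fin 2 → PushoutI φ) (ha0 : a 0 = of i g) (ha1 : a 1 = of j h) :
    Function.Injective (FreeGroup.lift a) := by
  classical
  obtain ⟨d⟩ := Monoid.PushoutI.NormalWord.transversal_nonempty φ hφ
  have key : FreeGroup.lift a =
      (CoprodI.lift fun b : Fin 2 => FreeGroup.lift fun _ : Unit => a b).comp
        (freeGroupEquivCoprodI (ι := Fin 2)).toMonoidHom := by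
    ext b
    simp
  rw [key, MonoidHom.coe_comp]
  refine Function.Injective.comp ?_ (MulEquiv.injective _)
  letI : MulAction (PushoutI φ) (NormalWord d) := NormalWord.mulAction
  refine CoprodI.lift_injective_of_ping_pong _ ?_
    (fun b : Fin 2 => {w : NormalWord d | w.fstIdx = some (if b = 0 then i else j)}) ?_ ?_ ?_
  · -- cardinality
    right
    refine ⟨0, ?_⟩
    rw [FreeGroup.freeGroupUnitEquivInt.cardinal_eq, Cardinal.mk_denumerable]
    exact (Cardinal.nat_lt_aleph0 3).le
  · -- nonempty
    intro b
    have hg1 : g ∉ (φ i).range := by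
      have := hg 1 one_ne_zero; rwa [zpow_one] at this
    have hh1 : h ∉ (φ j).range := by
      have := hh 1 one_ne_zero; rwa [zpow_one] at this
    have hempty : (NormalWord.empty (d := d)).fstIdx = none := rfl
    fin_cases b
    · refine ⟨of (φ := φ) i g • NormalWord.empty, ?_⟩
      simp only [Set.mem_setOf_eq, if_pos rfl]
      exact fstIdx_of_smul i g hg1 _ (by rw [hempty]; exact fun hcon => nomatch hcon)
    · refine ⟨of (φ := φ) j h • NormalWord.empty, ?_⟩
      simp only [Set.mem_setOf_eq]
      norm_num
      exact fstIdx_of_smul j h hh1 _ (by rw [hempty]; exact fun hcon => nomatch hcon)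
  · -- disjoint
    intro b b' hbb'
    simp only [Function.onFun, Set.disjoint_left]
    intro w hwb hwb'
    simp only [Set.mem_setOf_eq] at hwb hwb'
    apply hbb'
    have : (if b = 0 then i else j) = (if b' = 0 then i else j) := by
      have := hwb ▸ hwb'
      exact Option.some_injective _ (hwb.symm.trans hwb')
    fin_cases b <;> fin_cases b' <;> simp_all
  · -- ping pong
    intro b b' hbb' u hu
    fin_cases b <;> fin_cases b'
    · exact absurd rfl hbb'
    · -- b = 0, b' = 1
      norm_num
      have hp := push_subset (d := d) (Ne.symm hij) hg u hu
      rw [← ha0] at hp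
      exact hp
    · -- b = 1, b' = 0
      norm_num
      have hp := push_subset (d := d) hij hh u hu
      rw [← ha1] at hp
      exact hp
    · exact absurd rfl hbb'

end PingPong

-- REAL CONTENT STARTS
/-- a two-member family of groups -/
abbrev fam (A B : Type) : Bool → Type := fun b => bif b then B else A

instance famGroup {A B : Type} [Group A] [Group B] : ∀ b, Group (fam A B b)
  | false => inferInstanceAs (Group A)
  | true => inferInstanceAs (Group B)

/-- a two-member family of homomorphisms -/
def famHom {H A B : Type} [Group H] [Group A] [Group B] (φa : H →* A) (φb : H →* B) :
    ∀ b, H →* fam A B b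
  | false => φa
  | true => φb

def a0 (k : ℕ) : Chain k := ch k 0
def aL (k : ℕ) : Chain k := ch k (Fin.last k)

def PropA (k : ℕ) : Prop := ∀ p m : ℤ, (a0 k) ^ p = (aL k) ^ m → p = 0 ∧ m = 0
def PropC (k : ℕ) : Prop := ∀ m : ℤ, (aL k) ^ m = 1 → m = 0
def PropB (k : ℕ) : Prop :=
  Function.Injective (FreeGroup.lift (fun b : Fin 2 => if b = 0 then a0 k else aL k))

theorem aL_one : aL 1 = ch 1 1 := rfl

theorem propA_one : PropA 1 := fun p m h => F1 h
theorem propC_one : PropC 1 := fun m h => F2 h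

section Step

variable (k : ℕ)

noncomputable def phi1 : FreeGroup Unit →* Chain k := FreeGroup.lift (fun _ => aL k)
noncomputable def phi2 : FreeGroup Unit →* Chain 1 := FreeGroup.lift (fun _ => a0 1)

noncomputable abbrev StepP := PushoutI (famHom (phi1 k) (phi2))

noncomputable def ofA : Chain k →* StepP k := of (φ := famHom (phi1 k) phi2) false
noncomputable def ofB : Chain 1 →* StepP k := of (φ := famHom (phi1 k) phi2) true

variable {k}

theorem step_hphi (hC : PropC k) : ∀ b, Function.Injective (famHom (phi1 k) phi2 b)
  | false => unit_lift_injective (fun r h => hC r h)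
  | true => unit_lift_injective (fun r h => F3 h)

theorem range_phi1 {x : Chain k} (hx : x ∈ (phi1 k).range) : ∃ r : ℤ, x = (aL k) ^ r := by
  obtain ⟨u, rfl⟩ := hx
  obtain ⟨r, rfl, -⟩ := unit_pow u
  exact ⟨r, by rw [map_zpow, phi1, FreeGroup.lift_apply_of]⟩

theorem range_phi2 {x : Chain 1} (hx : x ∈ (phi2).range) : ∃ r : ℤ, x = (a0 1) ^ r := by
  obtain ⟨u, rfl⟩ := hx
  obtain ⟨r, rfl, -⟩ := unit_pow u
  exact ⟨r, by rw [map_zpow, phi2, FreeGroup.lift_apply_of]⟩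

theorem cross_step : ofA k (aL k) = ofB k (a0 1) := by
  have h1 : ofA k (aL k) = base (famHom (phi1 k) phi2) (FreeGroup.of ()) := by
    have e : aL k = (famHom (phi1 k) phi2) false (FreeGroup.of ()) := by
      show aL k = FreeGroup.lift (fun _ : Unit => aL k) (FreeGroup.of ())
      rw [FreeGroup.lift_apply_of]
    rw [ofA, e]
    exact of_apply_eq_base (famHom (phi1 k) phi2) false (FreeGroup.of ())
  have h2 : ofB k (a0 1) = base (famHom (phi1 k) phi2) (FreeGroup.of ()) := by
    have e : a0 1 = (famHom (phi1 k) phi2) true (FreeGroup.of ()) := by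
      show a0 1 = FreeGroup.lift (fun _ : Unit => a0 1) (FreeGroup.of ())
      rw [FreeGroup.lift_apply_of]
    rw [ofB, e]
    exact of_apply_eq_base (famHom (phi1 k) phi2) true (FreeGroup.of ())
  rw [h1, h2]

variable (k)

/-- the map from `Chain (k+1)` to the pushout -/
noncomputable def psi : Chain (k + 1) →* StepP k :=
  PresentedGroup.toGroup (f := fun m : Fin (k + 2) =>
    if h : (m : ℕ) < k + 1 then ofA k (ch k ⟨m, h⟩) else ofB k (ch 1 1)) (by
  rintro r ⟨i, rfl⟩
  simp only [map_mul, map_inv, map_pow, FreeGroup.lift_apply_of]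
  have hc1 : (if h : ((i.castSucc : Fin (k+2)) : ℕ) < k + 1
      then ofA k (ch k ⟨(i.castSucc : Fin (k+2)), h⟩) else ofB k (ch 1 1)) =
      ofA k (ch k ⟨(i : ℕ), i.isLt⟩) := by
    rw [dif_pos ((Fin.coe_castSucc i) ▸ i.isLt)]
    first
    | rfl
    | (congr 1; apply Fin.ext; simp)
  by_cases hik : (i : ℕ) < k
  · have hc2 : (if h : ((i.succ : Fin (k+2)) : ℕ) < k + 1
        then ofA k (ch k ⟨(i.succ : Fin (k+2)), h⟩) else ofB k (ch 1 1)) =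
        ofA k (ch k ⟨(i : ℕ) + 1, by omega⟩) := by
      rw [dif_pos (show ((i.succ : Fin (k+2)) : ℕ) < k + 1 by rw [Fin.val_succ]; omega)]
      first
      | rfl
      | (congr 1; apply Fin.ext; simp)
    rw [hc1, hc2]
    have e1 : (⟨(i : ℕ), i.isLt⟩ : Fin (k+1)) = Fin.castSucc ⟨(i : ℕ), hik⟩ := by
      apply Fin.ext; simp
    have e2 : (⟨(i : ℕ) + 1, by omega⟩ : Fin (k+1)) = Fin.succ ⟨(i : ℕ), hik⟩ := by
      apply Fin.ext; simp
    rw [e1, e2]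
    exact map_rel_aux (ofA k) (chain_rel k ⟨(i : ℕ), hik⟩)
  · have hik' : (i : ℕ) = k := by omega
    have hc2 : (if h : ((i.succ : Fin (k+2)) : ℕ) < k + 1
        then ofA k (ch k ⟨(i.succ : Fin (k+2)), h⟩) else ofB k (ch 1 1)) =
        ofB k (ch 1 1) := by
      rw [dif_neg]
      rw [Fin.val_succ, hik']
      omega
    have e1 : (⟨(i : ℕ), i.isLt⟩ : Fin (k+1)) = Fin.last k := by
      apply Fin.ext; simp [hik']
    rw [hc1, hc2, e1]
    rw [show ch k (Fin.last k) = aL k from rfl, cross_step]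
    have crel : a0 1 * ch 1 1 * (a0 1)⁻¹ * ((ch 1 1)⁻¹) ^ 2 = 1 := by
      have := chain_rel 1 0
      norm_num at this
      exact this
    exact map_rel_aux (ofB k) crel)

theorem psi_a0 : psi k (a0 (k + 1)) = ofA k (a0 k) := by
  rw [a0, ch, psi, PresentedGroup.toGroup.of]
  rw [dif_pos (show (((0 : Fin (k+2))) : ℕ) < k + 1 by simp)]
  first
  | rfl
  | (congr 1; apply Fin.ext; simp [a0])

theorem psi_aL : psi k (aL (k + 1)) = ofB k (ch 1 1) := by
  rw [aL, ch, psi, PresentedGroup.toGroup.of]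
  rw [dif_neg]
  simp

variable {k}

theorem stepC (hC : PropC k) : PropC (k + 1) := by
  intro m hm
  have h := congrArg (psi k) hm
  rw [map_zpow, map_one, psi_aL, ← map_zpow] at h
  have h2 : (ch 1 1) ^ m = 1 :=
    of_injective (step_hphi hC) true (by rw [map_one]; exact h)
  exact F2 h2

theorem stepA (hk : 1 ≤ k) (hA : PropA k) (hC : PropC k) : PropA (k + 1) := by
  intro p m hpm
  have h := congrArg (psi k) hpm
  rw [map_zpow, map_zpow, psi_a0, psi_aL, ← map_zpow, ← map_zpow] at h
  have hmem : ofA k ((a0 k) ^ p) ∈ (base (famHom (phi1 k) phi2)).range := by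
    rw [← inf_of_range_eq_base_range (step_hphi hC) (show (false : Bool) ≠ true by simp)]
    exact ⟨⟨(a0 k) ^ p, rfl⟩, ⟨(ch 1 1) ^ m, h.symm⟩⟩
  obtain ⟨u, hu⟩ := hmem
  obtain ⟨r, rfl, -⟩ := unit_pow u
  have hbase : base (famHom (phi1 k) phi2) (FreeGroup.of () ^ r) = ofA k ((aL k) ^ r) := by
    rw [map_zpow, map_zpow]
    congr 1
    have e : aL k = (famHom (phi1 k) phi2) false (FreeGroup.of ()) := by
      show aL k = FreeGroup.lift (fun _ : Unit => aL k) (FreeGroup.of ())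
      rw [FreeGroup.lift_apply_of]
    rw [ofA, e]
    exact (of_apply_eq_base (famHom (phi1 k) phi2) false (FreeGroup.of ())).symm
  rw [hbase] at hu
  have heq : (aL k) ^ r = (a0 k) ^ p := of_injective (step_hphi hC) false hu
  obtain ⟨hp0, hr0⟩ := hA p r heq.symm
  refine ⟨hp0, ?_⟩
  apply stepC hC
  rw [← hpm, hp0, zpow_zero]

theorem stepB (hA : PropA k) (hC : PropC k) : PropB (k + 1) := by
  have hg : ∀ n : ℤ, n ≠ 0 → (a0 k) ^ n ∉ ((famHom (phi1 k) phi2) false).range := by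
    intro n hn hmem
    obtain ⟨r, hr⟩ := range_phi1 hmem
    exact hn (hA n r hr).1
  have hh : ∀ n : ℤ, n ≠ 0 → (ch 1 1) ^ n ∉ ((famHom (phi1 k) phi2) true).range := by
    intro n hn hmem
    obtain ⟨r, hr⟩ := range_phi2 hmem
    have : (a0 1) ^ r = (ch 1 1) ^ n := hr.symm
    exact hn (F1 this).2
  have hinj := pushout_free_pair (step_hphi hC) (show (false : Bool) ≠ true by simp) hg hh
    (fun b : Fin 2 => if b = 0 then ofA k (a0 k) else ofB k (ch 1 1))
    (by norm_num; rfl) (by norm_num; rfl)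
  have hcomp := lift_pair_comp (psi k) (a0 (k + 1)) (aL (k + 1))
  rw [psi_a0, psi_aL] at hcomp
  have hinj2 : Function.Injective ((psi k).comp
      (FreeGroup.lift (fun b : Fin 2 => if b = 0 then a0 (k+1) else aL (k+1)))) := by
    rw [hcomp]; exact hinj
  rw [MonoidHom.coe_comp] at hinj2
  exact hinj2.of_comp

end Step

theorem chainAC : ∀ k, 1 ≤ k → PropA k ∧ PropC k := by
  intro k hk
  induction k, hk using Nat.le_induction with
  | base => exact ⟨propA_one, propC_one⟩
  | succ k hk ih => exact ⟨stepA hk ih.1 ih.2, stepC ih.2⟩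

theorem chainB (k : ℕ) (hk : 1 ≤ k) : PropB (k + 1) :=
  stepB (chainAC k hk).1 (chainAC k hk).2

-- REAL CONTENT
theorem chain_rel' (k a b : ℕ) (ha : a < k) (hb : b = a + 1) (ha' : a < k + 1) (hb' : b < k + 1) :
    ch k ⟨a, ha'⟩ * ch k ⟨b, hb'⟩ * (ch k ⟨a, ha'⟩)⁻¹ * ((ch k ⟨b, hb'⟩)⁻¹) ^ 2 = 1 := by
  have e1 : (⟨a, ha'⟩ : Fin (k + 1)) = Fin.castSucc ⟨a, ha⟩ := by apply Fin.ext; simp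
  have e2 : (⟨b, hb'⟩ : Fin (k + 1)) = Fin.succ ⟨a, ha⟩ := by apply Fin.ext; simp [hb]
  rw [e1, e2]
  exact chain_rel k ⟨a, ha⟩

section Top

variable (n : ℕ)

noncomputable def phiA : FreeGroup (Fin 2) →* Chain 2 :=
  FreeGroup.lift (fun b : Fin 2 => if b = 0 then a0 2 else aL 2)

noncomputable def phiB : FreeGroup (Fin 2) →* Chain (n - 2) :=
  FreeGroup.lift (fun b : Fin 2 => if b = 0 then aL (n - 2) else a0 (n - 2))

noncomputable abbrev TopQ := PushoutI (famHom phiA (phiB n))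

noncomputable def ofA' : Chain 2 →* TopQ n := of (φ := famHom phiA (phiB n)) false
noncomputable def ofB' : Chain (n - 2) →* TopQ n := of (φ := famHom phiA (phiB n)) true

variable {n}

theorem top_hphi (hn : 5 ≤ n) : ∀ b, Function.Injective (famHom phiA (phiB n) b)
  | false => chainB 1 le_rfl
  | true => by
    have h2 : n - 3 + 1 = n - 2 := by omega
    have h := chainB (n - 3) (by omega)
    rw [h2] at h
    exact lift_pair_swap_injective h

theorem crossA0 : ofA' n (a0 2) = ofB' n (aL (n - 2)) := by
  have h1 : ofA' n (a0 2) = base (famHom phiA (phiB n)) (FreeGroup.of (0 : Fin 2)) := by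
    have e : a0 2 = (famHom phiA (phiB n)) false (FreeGroup.of (0 : Fin 2)) := by
      show a0 2 = FreeGroup.lift (fun b : Fin 2 => if b = 0 then a0 2 else aL 2)
        (FreeGroup.of (0 : Fin 2))
      rw [FreeGroup.lift_apply_of, if_pos rfl]
    rw [ofA', e]
    exact of_apply_eq_base (famHom phiA (phiB n)) false (FreeGroup.of (0 : Fin 2))
  have h2 : ofB' n (aL (n - 2)) = base (famHom phiA (phiB n)) (FreeGroup.of (0 : Fin 2)) := by
    have e : aL (n - 2) = (famHom phiA (phiB n)) true (FreeGroup.of (0 : Fin 2)) := by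
      show aL (n - 2) = FreeGroup.lift (fun b : Fin 2 => if b = 0 then aL (n-2) else a0 (n-2))
        (FreeGroup.of (0 : Fin 2))
      rw [FreeGroup.lift_apply_of, if_pos rfl]
    rw [ofB', e]
    exact of_apply_eq_base (famHom phiA (phiB n)) true (FreeGroup.of (0 : Fin 2))
  rw [h1, h2]

theorem crossA2 : ofA' n (aL 2) = ofB' n (a0 (n - 2)) := by
  have h1 : ofA' n (aL 2) = base (famHom phiA (phiB n)) (FreeGroup.of (1 : Fin 2)) := by
    have e : aL 2 = (famHom phiA (phiB n)) false (FreeGroup.of (1 : Fin 2)) := by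
      show aL 2 = FreeGroup.lift (fun b : Fin 2 => if b = 0 then a0 2 else aL 2)
        (FreeGroup.of (1 : Fin 2))
      rw [FreeGroup.lift_apply_of, if_neg (by decide)]
    rw [ofA', e]
    exact of_apply_eq_base (famHom phiA (phiB n)) false (FreeGroup.of (1 : Fin 2))
  have h2 : ofB' n (a0 (n - 2)) = base (famHom phiA (phiB n)) (FreeGroup.of (1 : Fin 2)) := by
    have e : a0 (n - 2) = (famHom phiA (phiB n)) true (FreeGroup.of (1 : Fin 2)) := by
      show a0 (n - 2) = FreeGroup.lift (fun b : Fin 2 => if b = 0 then aL (n-2) else a0 (n-2))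
        (FreeGroup.of (1 : Fin 2))
      rw [FreeGroup.lift_apply_of, if_neg (by decide)]
    rw [ofB', e]
    exact of_apply_eq_base (famHom phiA (phiB n)) true (FreeGroup.of (1 : Fin 2))
  rw [h1, h2]

variable (n)

noncomputable def fQ (hn : 5 ≤ n) : ZMod n → TopQ n := fun i =>
  haveI : NeZero n := ⟨by omega⟩
  if h : i.val ≤ 2 then ofA' n (ch 2 ⟨i.val, by omega⟩)
  else ofB' n (ch (n - 2) ⟨i.val - 2, by have := ZMod.val_lt i; omega⟩)

variable {n}

theorem fQ_low (hn : 5 ≤ n) (i : ZMod n) (h : i.val ≤ 2) (hlt : i.val < 3) :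
    fQ n hn i = ofA' n (ch 2 ⟨i.val, hlt⟩) := by
  rw [fQ, dif_pos h]

theorem fQ_high (hn : 5 ≤ n) (i : ZMod n) (h : ¬ i.val ≤ 2) (hlt : i.val - 2 < n - 2 + 1) :
    fQ n hn i = ofB' n (ch (n - 2) ⟨i.val - 2, hlt⟩) := by
  rw [fQ, dif_neg h]

theorem zmod_succ_val (hn : 5 ≤ n) (i : ZMod n) : (i + 1).val = (i.val + 1) % n := by
  haveI : NeZero n := ⟨by omega⟩
  have hi : ((i.val : ℕ) : ZMod n) = i := ZMod.natCast_rightInverse i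
  conv_lhs => rw [← hi]
  rw [show ((i.val : ℕ) : ZMod n) + 1 = ((i.val + 1 : ℕ) : ZMod n) by push_cast; ring]
  exact ZMod.val_natCast _ _

theorem fQ_low' (hn : 5 ≤ n) (i : ZMod n) (v : ℕ) (hiv : i.val = v) (h : v ≤ 2) (hlt : v < 3) :
    fQ n hn i = ofA' n (ch 2 ⟨v, hlt⟩) := by
  subst hiv; rw [fQ, dif_pos h]

theorem fQ_high' (hn : 5 ≤ n) (i : ZMod n) (v : ℕ) (hiv : i.val = v) (h : ¬ v ≤ 2)
    (hlt : v - 2 < n - 2 + 1) :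
    fQ n hn i = ofB' n (ch (n - 2) ⟨v - 2, hlt⟩) := by
  subst hiv; rw [fQ, dif_neg h]


variable (n)

noncomputable def psiN (hn : 5 ≤ n) : HigmanGroup n →* TopQ n :=
  PresentedGroup.toGroup (f := fQ n hn) (by
    rintro r ⟨i, rfl⟩
    haveI : NeZero n := ⟨by omega⟩
    simp only [map_mul, map_inv, map_pow, FreeGroup.lift_apply_of]
    have hv : i.val < n := ZMod.val_lt i
    rcases Nat.lt_or_ge i.val 2 with h01 | hge
    · -- v ≤ 1
      have hv1 : (i + 1).val = i.val + 1 := by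
        rw [zmod_succ_val hn]; exact Nat.mod_eq_of_lt (by omega)
      rw [fQ_low' hn i i.val rfl (by omega) (by omega),
        fQ_low' hn (i + 1) (i.val + 1) hv1 (by omega) (by omega)]
      exact map_rel_aux (ofA' n) (chain_rel' 2 i.val (i.val + 1) (by omega) rfl _ _)
    · rcases Nat.lt_or_ge i.val 3 with h2 | hge3
      · -- v = 2
        have hv2 : i.val = 2 := by omega
        have hv1 : (i + 1).val = 3 := by
          rw [zmod_succ_val hn, hv2]; exact Nat.mod_eq_of_lt (by omega)
        rw [fQ_low' hn i 2 hv2 (by omega) (by omega),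
          fQ_high' hn (i + 1) 3 hv1 (by omega) (by omega)]
        rw [show (⟨2, by omega⟩ : Fin 3) = Fin.last 2 from by apply Fin.ext; simp]
        rw [show ch 2 (Fin.last 2) = aL 2 from rfl, crossA2]
        exact map_rel_aux (ofB' n) (chain_rel' (n - 2) 0 (3 - 2) (by omega) rfl (by omega) _)
      · rcases Nat.lt_or_ge i.val (n - 1) with hmid | hlast
        · -- 3 ≤ v ≤ n - 2
          have hv1 : (i + 1).val = i.val + 1 := by
            rw [zmod_succ_val hn]; exact Nat.mod_eq_of_lt (by omega)
          rw [fQ_high' hn i i.val rfl (by omega) (by omega),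
            fQ_high' hn (i + 1) (i.val + 1) hv1 (by omega) (by omega)]
          exact map_rel_aux (ofB' n)
            (chain_rel' (n - 2) (i.val - 2) (i.val + 1 - 2) (by omega) (by omega) _ _)
        · -- v = n - 1
          have hveq : i.val = n - 1 := by omega
          have hv1 : (i + 1).val = 0 := by
            rw [zmod_succ_val hn, hveq, show n - 1 + 1 = n by omega]
            exact Nat.mod_self n
          rw [fQ_high' hn i (n - 1) hveq (by omega) (by omega),
            fQ_low' hn (i + 1) 0 hv1 (by omega) (by omega)]
          rw [show (⟨0, by omega⟩ : Fin 3) = (0 : Fin 3) from by apply Fin.ext; simp]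
          rw [show ch 2 (0 : Fin 3) = a0 2 from rfl, crossA0]
          exact map_rel_aux (ofB' n)
            (chain_rel' (n - 2) (n - 1 - 2) (n - 2) (by omega) (by omega) _ (by omega)))

noncomputable def theta : FreeGroup (Fin 2) →* HigmanGroup n :=
  FreeGroup.lift (fun b : Fin 2 => if b = 0 then (PresentedGroup.of (0 : ZMod n) : HigmanGroup n)
    else PresentedGroup.of (2 : ZMod n))

variable {n}

theorem theta_injective (hn : 5 ≤ n) : Function.Injective (theta n) := by
  haveI : NeZero n := ⟨by omega⟩
  have hcomp : (psiN n hn).comp (theta n) = base (famHom phiA (phiB n)) := by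
    apply FreeGroup.ext_hom
    intro b
    fin_cases b
    · show (psiN n hn) ((theta n) (FreeGroup.of (0 : Fin 2))) =
        base (famHom phiA (phiB n)) (FreeGroup.of (0 : Fin 2))
      rw [theta, FreeGroup.lift_apply_of, if_pos rfl]
      have h1 : psiN n hn (PresentedGroup.of (0 : ZMod n)) = fQ n hn 0 := by
        rw [psiN, PresentedGroup.toGroup.of]
      rw [h1, fQ_low' hn 0 0 ZMod.val_zero (by omega) (by omega)]
      rw [show (⟨0, by omega⟩ : Fin 3) = (0 : Fin 3) from by apply Fin.ext; simp]
      rw [show ch 2 (0 : Fin 3) = a0 2 from rfl]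
      have e : a0 2 = (famHom phiA (phiB n)) false (FreeGroup.of (0 : Fin 2)) := by
        show a0 2 = FreeGroup.lift (fun b : Fin 2 => if b = 0 then a0 2 else aL 2)
          (FreeGroup.of (0 : Fin 2))
        rw [FreeGroup.lift_apply_of, if_pos rfl]
      rw [ofA', e]
      exact of_apply_eq_base (famHom phiA (phiB n)) false (FreeGroup.of (0 : Fin 2))
    · show (psiN n hn) ((theta n) (FreeGroup.of (1 : Fin 2))) =
        base (famHom phiA (phiB n)) (FreeGroup.of (1 : Fin 2))
      rw [theta, FreeGroup.lift_apply_of, if_neg (by decide)]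
      have h1 : psiN n hn (PresentedGroup.of (2 : ZMod n)) = fQ n hn 2 := by
        rw [psiN, PresentedGroup.toGroup.of]
      have hval2 : (2 : ZMod n).val = 2 := by
        rw [show (2 : ZMod n) = ((2 : ℕ) : ZMod n) by norm_cast, ZMod.val_natCast]
        exact Nat.mod_eq_of_lt (by omega)
      rw [h1, fQ_low' hn 2 2 hval2 (by omega) (by omega)]
      rw [show (⟨2, by omega⟩ : Fin 3) = Fin.last 2 from by apply Fin.ext; simp]
      rw [show ch 2 (Fin.last 2) = aL 2 from rfl]
      have e : aL 2 = (famHom phiA (phiB n)) false (FreeGroup.of (1 : Fin 2)) := by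
        show aL 2 = FreeGroup.lift (fun b : Fin 2 => if b = 0 then a0 2 else aL 2)
          (FreeGroup.of (1 : Fin 2))
        rw [FreeGroup.lift_apply_of, if_neg (by decide)]
      rw [ofA', e]
      exact of_apply_eq_base (famHom phiA (phiB n)) false (FreeGroup.of (1 : Fin 2))
  have hbase : Function.Injective (base (famHom phiA (phiB n))) :=
    base_injective (top_hphi hn)
  have hcinj : Function.Injective ((psiN n hn).comp (theta n)) := by
    rw [hcomp]; exact hbase
  rw [MonoidHom.coe_comp] at hcinj
  exact hcinj.of_comp

end Top

end HigmanAux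

theorem higman_has_free_subgroup (n : ℕ) (hn : 5 ≤ n) :
    ∃ f : FreeGroup (Fin 2) →* HigmanGroup n, Function.Injective f :=
  ⟨HigmanAux.theta n, HigmanAux.theta_injective hn⟩
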